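/- arXiv:2404.17019 — 3 statements merged into one kernel-verified Lean document; each statement's English description precedes it below -/
import Mathlib

section
/- The Population Average Prescriptive Effect equals the covariance between the ITR and the individual treatment effect: τ_f = Cov(f(X), Y(1) - Y(0)). -/
open MeasureTheory

/-- Covariance of two real-valued random variables. -/
noncomputable def cov {Ω : Type*} [MeasurableSpace Ω] (μ : Measure Ω) (X Y : Ω → ℝ) : ℝ :=
  ∫ ω, (X ω - ∫ x, X x ∂μ) * (Y ω - ∫ x, Y x ∂μ) ∂μ

lemma cov_eq_aux {Ω : Type*} [MeasurableSpace Ω] (μ : Measure Ω) [IsProbabilityMeasure μ]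
    (X Y : Ω → ℝ) (hX : Integrable X μ) (hY : Integrable Y μ)
    (hXY : Integrable (fun ω => X ω * Y ω) μ) :
    cov μ X Y = (∫ ω, X ω * Y ω ∂μ) - (∫ ω, X ω ∂μ) * (∫ ω, Y ω ∂μ) := by
  unfold cov
  set a := ∫ x, X x ∂μ with ha
  set b := ∫ x, Y x ∂μ with hb
  have h : ∀ ω, (X ω - a) * (Y ω - b) = (X ω * Y ω - a * Y ω - b * X ω) + a * b := by
    intro ω; ring
  simp_rw [h]
  have h2 : Integrable (fun ω => X ω * Y ω - a * Y ω) μ := hXY.sub (hY.const_mul a)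
  have h1 : Integrable (fun ω => X ω * Y ω - a * Y ω - b * X ω) μ := h2.sub (hX.const_mul b)
  rw [integral_add h1 (integrable_const _),
    integral_sub h2 (hX.const_mul b),
    integral_sub hXY (hY.const_mul a), integral_const_mul, integral_const_mul,
    integral_const]
  simp [← ha, ← hb]
  ring

/-- The Population Average Prescriptive Effect equals the covariance between the
ITR and the individual treatment effect: `τ_f = Cov(f(X), Y(1) - Y(0))`. -/
theorem pape_eq_cov {Ω α : Type*} [MeasurableSpace Ω] [MeasurableSpace α]
    (μ : Measure Ω) [IsProbabilityMeasure μ]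
    (Y1 Y0 : Ω → ℝ) (X : Ω → α) (f : α → ℝ)
    (hY1 : MemLp Y1 2 μ) (hY0 : MemLp Y0 2 μ)
    (hX : Measurable X) (hf : Measurable f)
    (hbin : ∀ a, f a = 0 ∨ f a = 1) :
    (∫ ω, (f (X ω) * Y1 ω + (1 - f (X ω)) * Y0 ω) ∂μ)
      - (μ {ω | f (X ω) = 1}).toReal * (∫ ω, Y1 ω ∂μ)
      - (1 - (μ {ω | f (X ω) = 1}).toReal) * (∫ ω, Y0 ω ∂μ)
      = cov μ (fun ω => f (X ω)) (fun ω => Y1 ω - Y0 ω) := by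
  set g : Ω → ℝ := fun ω => f (X ω) with hg
  have hgm : Measurable g := hf.comp hX
  have hgbd : ∀ ω, ‖g ω‖ ≤ 1 := by
    intro ω
    rcases hbin (X ω) with h | h <;> simp [hg, h]
  have hY1i : Integrable Y1 μ := hY1.integrable (by norm_num)
  have hY0i : Integrable Y0 μ := hY0.integrable (by norm_num)
  have hDi : Integrable (fun ω => Y1 ω - Y0 ω) μ := hY1i.sub hY0i
  have hgi : Integrable g μ :=
    (integrable_const (1 : ℝ)).mono' hgm.aestronglyMeasurable
      (Filter.Eventually.of_forall fun ω => by simpa using hgbd ω)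
  have hgDi : Integrable (fun ω => g ω * (Y1 ω - Y0 ω)) μ :=
    hDi.bdd_mul hgm.aestronglyMeasurable (c := 1) (Filter.Eventually.of_forall hgbd)
  -- ∫ g = μ {g = 1}
  have hind : g = Set.indicator {ω | g ω = 1} (fun _ => (1 : ℝ)) := by
    funext ω
    rcases hbin (X ω) with h | h <;>
      simp [hg, Set.indicator_apply, Set.mem_setOf_eq, h]
  have hset : MeasurableSet {ω | g ω = 1} := hgm (measurableSet_singleton 1)
  have hp : ∫ ω, g ω ∂μ = (μ {ω | g ω = 1}).toReal := by
    conv_lhs => rw [hind]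
    rw [integral_indicator hset]
    simp [Measure.real]
  have hsplit : ∫ ω, (g ω * Y1 ω + (1 - g ω) * Y0 ω) ∂μ
      = (∫ ω, g ω * (Y1 ω - Y0 ω) ∂μ) + ∫ ω, Y0 ω ∂μ := by
    rw [← integral_add hgDi hY0i]
    congr 1; funext ω; ring
  rw [cov_eq_aux μ g _ hgi hDi hgDi, hsplit, integral_sub hY1i hY0i, ← hp]
  ring
end

section
/- The variance of the PAV estimator equals E(S_{f1}²)/n_1 + E(S_{f0}²)/n_0, where S_{ft}² is the sample variance of Y_{fi}(t) = 1{f(X_i) = t} Y_i(t). -/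
open MeasureTheory ProbabilityTheory

lemma memLp_mul_integrable {Ω : Type*} [MeasurableSpace Ω] {μ : Measure Ω}
    {g h : Ω → ℝ} (hg : MemLp g 2 μ) (hh : MemLp h 2 μ) :
    Integrable (fun ω => g ω * h ω) μ := by
  have H := hh.smul (φ := g) hg (r := 1)
  rw [memLp_one_iff_integrable] at H
  exact H

lemma sum_ite_diag {n : ℕ} (t : Finset (Fin n)) (c d : ℝ) :
    ∑ i ∈ t, ∑ j ∈ t, (if i = j then c else d)
      = (t.card : ℝ) * c + (t.card : ℝ) * ((t.card : ℝ) - 1) * d := by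
  have h : ∀ i ∈ t, ∑ j ∈ t, (if i = j then c else d)
      = c + ((t.card : ℝ) - 1) * d := by
    intro i hi
    have e : ∑ j ∈ t, (if i = j then c else d)
        = ∑ j ∈ t, (d + if i = j then c - d else 0) := by
      refine Finset.sum_congr rfl fun j _ => ?_
      split_ifs <;> ring
    rw [e, Finset.sum_add_distrib, Finset.sum_const,
      Finset.sum_ite_eq t i (fun _ => c - d)]
    simp [hi, nsmul_eq_mul]
    ring
  rw [Finset.sum_congr rfl h, Finset.sum_const, nsmul_eq_mul]
  ring

lemma sample_var_expect {Ω : Type*} [MeasurableSpace Ω] (μ : Measure Ω)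
    [IsProbabilityMeasure μ] (n : ℕ) (hn : 2 ≤ n) (C : Fin n → Ω → ℝ)
    (hC2 : ∀ i, MemLp (C i) 2 μ) (c c2 : ℝ)
    (hEC2 : ∀ i, ∫ ω, (C i ω) ^ 2 ∂μ = c2)
    (hprod : ∀ i j, i ≠ j → ∫ ω, C i ω * C j ω ∂μ = c * c) :
    ∫ ω, (∑ i, (C i ω - (1 / (n : ℝ)) * ∑ j, C j ω) ^ 2) / ((n : ℝ) - 1) ∂μ
      = c2 - c * c := by
  have hnR : (n : ℝ) ≠ 0 := Nat.cast_ne_zero.mpr (by omega)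
  have hn1R : (n : ℝ) - 1 ≠ 0 := by
    have : (2 : ℝ) ≤ (n : ℝ) := by exact_mod_cast hn
    linarith
  have hIntCC : ∀ i j : Fin n, Integrable (fun ω => C i ω * C j ω) μ :=
    fun i j => memLp_mul_integrable (hC2 i) (hC2 j)
  have hIntC2 : ∀ i : Fin n, Integrable (fun ω => (C i ω) ^ 2) μ :=
    fun i => by simpa [sq] using hIntCC i i
  -- pointwise expansion
  have hpt : ∀ ω, (∑ i, (C i ω - (1 / (n : ℝ)) * ∑ j, C j ω) ^ 2)
      = (∑ i, (C i ω) ^ 2) - (1 / (n : ℝ)) * ∑ i, ∑ j, C i ω * C j ω := by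
    intro ω
    rw [← Finset.sum_mul_sum]
    have e1 : ∑ i, (C i ω - (1 / (n : ℝ)) * ∑ j, C j ω) ^ 2
        = ∑ i, ((C i ω) ^ 2
            - ((2 / (n : ℝ)) * ∑ j, C j ω) * C i ω
            + ((1 / (n : ℝ)) * ∑ j, C j ω) ^ 2) :=
      Finset.sum_congr rfl fun i _ => by ring
    rw [e1, Finset.sum_add_distrib, Finset.sum_sub_distrib, ← Finset.mul_sum,
      Finset.sum_const, Finset.card_univ, Fintype.card_fin, nsmul_eq_mul]
    field_simp
    ring
  have e2 : (fun ω => (∑ i, (C i ω - (1 / (n : ℝ)) * ∑ j, C j ω) ^ 2) / ((n : ℝ) - 1))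
      = fun ω => ((∑ i, (C i ω) ^ 2)
          - (1 / (n : ℝ)) * ∑ i, ∑ j, C i ω * C j ω) / ((n : ℝ) - 1) := by
    funext ω; rw [hpt ω]
  rw [e2]
  have hI1 : Integrable (fun ω => ∑ i, (C i ω) ^ 2) μ :=
    integrable_finset_sum _ fun i _ => hIntC2 i
  have hI2 : Integrable (fun ω => ∑ i : Fin n, ∑ j : Fin n, C i ω * C j ω) μ :=
    integrable_finset_sum _ fun i _ => integrable_finset_sum _ fun j _ => hIntCC i j
  rw [integral_div, integral_sub hI1 (hI2.const_mul _), integral_finset_sum _ (fun i _ => hIntC2 i),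
    integral_const_mul, integral_finset_sum _ (fun i _ => integrable_finset_sum _ fun j _ => hIntCC i j)]
  have e4 : ∀ i ∈ (Finset.univ : Finset (Fin n)),
      ∫ ω, ∑ j : Fin n, C i ω * C j ω ∂μ = ∑ j : Fin n, ∫ ω, C i ω * C j ω ∂μ :=
    fun i _ => integral_finset_sum _ fun j _ => hIntCC i j
  rw [Finset.sum_congr rfl e4]
  have e3 : ∀ i ∈ (Finset.univ : Finset (Fin n)),
      ∑ j : Fin n, ∫ ω, C i ω * C j ω ∂μ
        = ∑ j : Fin n, (if i = j then c2 else c * c) := by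
    intro i _
    refine Finset.sum_congr rfl fun j _ => ?_
    split_ifs with h
    · subst h; rw [← hEC2 i]; congr 1; funext ω; ring
    · exact hprod i j h
  rw [Finset.sum_congr rfl e3]
  have := sum_ite_diag (Finset.univ : Finset (Fin n)) c2 (c * c)
  rw [this, Finset.sum_congr rfl (fun i (_ : i ∈ Finset.univ) => hEC2 i),
    Finset.sum_const, Finset.card_univ, Fintype.card_fin, nsmul_eq_mul]
  field_simp
  ring


lemma pav_key {Ω : Type*} [MeasurableSpace Ω] (μ : Measure Ω) [IsProbabilityMeasure μ]
    (n n1 : ℕ) (hn1 : 1 ≤ n1) (hlt : n1 < n)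
    (A B : Fin n → Ω → ℝ)
    (hA2 : ∀ i, MemLp (A i) 2 μ) (hB2 : ∀ i, MemLp (B i) 2 μ)
    (hzero : ∀ i ω, A i ω * B i ω = 0)
    (hindep : ∀ i j : Fin n, i ≠ j →
      IndepFun (fun ω => (A i ω, B i ω)) (fun ω => (A j ω, B j ω)) μ)
    (a b a2 b2 : ℝ)
    (hEA : ∀ i, ∫ ω, A i ω ∂μ = a) (hEB : ∀ i, ∫ ω, B i ω ∂μ = b)
    (hEA2 : ∀ i, ∫ ω, (A i ω) ^ 2 ∂μ = a2) (hEB2 : ∀ i, ∫ ω, (B i ω) ^ 2 ∂μ = b2) :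
    (1 / (n.choose n1 : ℝ)) *
        (∑ s ∈ Finset.powersetCard n1 (Finset.univ : Finset (Fin n)),
          ∫ ω, ((1 / (n1 : ℝ)) * ∑ i ∈ s, A i ω
            + (1 / ((n - n1 : ℕ) : ℝ)) * ∑ i ∈ sᶜ, B i ω) ^ 2 ∂μ)
      - ((1 / (n.choose n1 : ℝ)) *
          ∑ s ∈ Finset.powersetCard n1 (Finset.univ : Finset (Fin n)),
            ∫ ω, ((1 / (n1 : ℝ)) * ∑ i ∈ s, A i ω
              + (1 / ((n - n1 : ℕ) : ℝ)) * ∑ i ∈ sᶜ, B i ω) ∂μ) ^ 2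
      = (∫ ω, (∑ i, (A i ω - (1 / (n : ℝ)) * ∑ j, A j ω) ^ 2) / ((n : ℝ) - 1) ∂μ)
            / (n1 : ℝ)
        + (∫ ω, (∑ i, (B i ω - (1 / (n : ℝ)) * ∑ j, B j ω) ^ 2) / ((n : ℝ) - 1) ∂μ)
            / ((n - n1 : ℕ) : ℝ) := by
  have hn : 2 ≤ n := by omega
  have hn1R : (n1 : ℝ) ≠ 0 := Nat.cast_ne_zero.mpr (by omega)
  have hn0R : ((n - n1 : ℕ) : ℝ) ≠ 0 := Nat.cast_ne_zero.mpr (by omega)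
  have hIA : ∀ i, Integrable (A i) μ := fun i => (hA2 i).integrable one_le_two
  have hIB : ∀ i, Integrable (B i) μ := fun i => (hB2 i).integrable one_le_two
  have hIAA : ∀ i j, Integrable (fun ω => A i ω * A j ω) μ :=
    fun i j => memLp_mul_integrable (hA2 i) (hA2 j)
  have hIBB : ∀ i j, Integrable (fun ω => B i ω * B j ω) μ :=
    fun i j => memLp_mul_integrable (hB2 i) (hB2 j)
  have hIAB : ∀ i j, Integrable (fun ω => A i ω * B j ω) μ :=
    fun i j => memLp_mul_integrable (hA2 i) (hB2 j)
  -- cross moments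
  have hAA : ∀ i j : Fin n, i ≠ j → ∫ ω, A i ω * A j ω ∂μ = a * a := by
    intro i j hij
    have h : ∫ ω, A i ω * A j ω ∂μ = (∫ ω, A i ω ∂μ) * ∫ ω, A j ω ∂μ :=
      ((hindep i j hij).comp measurable_fst measurable_fst).integral_fun_mul_eq_mul_integral
        (hIA i).aestronglyMeasurable (hIA j).aestronglyMeasurable
    rw [h, hEA i, hEA j]
  have hBB : ∀ i j : Fin n, i ≠ j → ∫ ω, B i ω * B j ω ∂μ = b * b := by
    intro i j hij
    have h : ∫ ω, B i ω * B j ω ∂μ = (∫ ω, B i ω ∂μ) * ∫ ω, B j ω ∂μ :=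
      ((hindep i j hij).comp measurable_snd measurable_snd).integral_fun_mul_eq_mul_integral
        (hIB i).aestronglyMeasurable (hIB j).aestronglyMeasurable
    rw [h, hEB i, hEB j]
  have hAB : ∀ i j : Fin n, i ≠ j → ∫ ω, A i ω * B j ω ∂μ = a * b := by
    intro i j hij
    have h : ∫ ω, A i ω * B j ω ∂μ = (∫ ω, A i ω ∂μ) * ∫ ω, B j ω ∂μ :=
      ((hindep i j hij).comp measurable_fst measurable_snd).integral_fun_mul_eq_mul_integral
        (hIA i).aestronglyMeasurable (hIB j).aestronglyMeasurable
    rw [h, hEA i, hEB j]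
  -- first moment of the estimator, for each assignment
  have hfirst : ∀ s ∈ Finset.powersetCard n1 (Finset.univ : Finset (Fin n)),
      ∫ ω, ((1 / (n1 : ℝ)) * ∑ i ∈ s, A i ω
          + (1 / ((n - n1 : ℕ) : ℝ)) * ∑ i ∈ sᶜ, B i ω) ∂μ = a + b := by
    intro s hs
    have hcard : s.card = n1 := (Finset.mem_powersetCard.mp hs).2
    have hcardc : (sᶜ).card = n - n1 := by
      simp [Finset.card_compl, hcard]
    have h1 : Integrable (fun ω => ∑ i ∈ s, A i ω) μ :=
      integrable_finset_sum _ fun i _ => hIA i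
    have h2 : Integrable (fun ω => ∑ i ∈ sᶜ, B i ω) μ :=
      integrable_finset_sum _ fun i _ => hIB i
    rw [integral_add (h1.const_mul _) (h2.const_mul _), integral_const_mul,
      integral_const_mul, integral_finset_sum _ (fun i _ => hIA i),
      integral_finset_sum _ (fun i _ => hIB i),
      Finset.sum_congr rfl (fun i _ => hEA i), Finset.sum_congr rfl (fun i _ => hEB i),
      Finset.sum_const, Finset.sum_const, hcard, hcardc, nsmul_eq_mul, nsmul_eq_mul]
    field_simp
  -- second moment of the estimator, for each assignment
  have hsecond : ∀ s ∈ Finset.powersetCard n1 (Finset.univ : Finset (Fin n)),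
      ∫ ω, ((1 / (n1 : ℝ)) * ∑ i ∈ s, A i ω
          + (1 / ((n - n1 : ℕ) : ℝ)) * ∑ i ∈ sᶜ, B i ω) ^ 2 ∂μ
        = (1 / (n1 : ℝ)) ^ 2 * ((n1 : ℝ) * a2 + (n1 : ℝ) * ((n1 : ℝ) - 1) * (a * a))
          + (2 * (1 / (n1 : ℝ)) * (1 / ((n - n1 : ℕ) : ℝ)))
              * ((n1 : ℝ) * (((n - n1 : ℕ) : ℝ)) * (a * b))
          + (1 / ((n - n1 : ℕ) : ℝ)) ^ 2
              * (((n - n1 : ℕ) : ℝ) * b2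
                + ((n - n1 : ℕ) : ℝ) * (((n - n1 : ℕ) : ℝ) - 1) * (b * b)) := by
    intro s hs
    have hcard : s.card = n1 := (Finset.mem_powersetCard.mp hs).2
    have hcardc : (sᶜ).card = n - n1 := by
      simp [Finset.card_compl, hcard]
    have hpt : (fun ω => ((1 / (n1 : ℝ)) * ∑ i ∈ s, A i ω
          + (1 / ((n - n1 : ℕ) : ℝ)) * ∑ i ∈ sᶜ, B i ω) ^ 2)
        = fun ω => (1 / (n1 : ℝ)) ^ 2 * ∑ i ∈ s, ∑ j ∈ s, A i ω * A j ω
            + (2 * (1 / (n1 : ℝ)) * (1 / ((n - n1 : ℕ) : ℝ)))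
                * ∑ i ∈ s, ∑ j ∈ sᶜ, A i ω * B j ω
            + (1 / ((n - n1 : ℕ) : ℝ)) ^ 2 * ∑ i ∈ sᶜ, ∑ j ∈ sᶜ, B i ω * B j ω := by
      funext ω
      rw [← Finset.sum_mul_sum, ← Finset.sum_mul_sum, ← Finset.sum_mul_sum]
      ring
    rw [hpt]
    have I1 : Integrable (fun ω => ∑ i ∈ s, ∑ j ∈ s, A i ω * A j ω) μ :=
      integrable_finset_sum _ fun i _ => integrable_finset_sum _ fun j _ => hIAA i j
    have I2 : Integrable (fun ω => ∑ i ∈ s, ∑ j ∈ sᶜ, A i ω * B j ω) μ :=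
      integrable_finset_sum _ fun i _ => integrable_finset_sum _ fun j _ => hIAB i j
    have I3 : Integrable (fun ω => ∑ i ∈ sᶜ, ∑ j ∈ sᶜ, B i ω * B j ω) μ :=
      integrable_finset_sum _ fun i _ => integrable_finset_sum _ fun j _ => hIBB i j
    have J12 : Integrable (fun ω => (1 / (n1 : ℝ)) ^ 2 * ∑ i ∈ s, ∑ j ∈ s, A i ω * A j ω
        + (2 * (1 / (n1 : ℝ)) * (1 / ((n - n1 : ℕ) : ℝ)))
            * ∑ i ∈ s, ∑ j ∈ sᶜ, A i ω * B j ω) μ :=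
      (I1.const_mul _).add (I2.const_mul _)
    rw [integral_add J12 (I3.const_mul _),
      integral_add (I1.const_mul _) (I2.const_mul _),
      integral_const_mul, integral_const_mul, integral_const_mul,
      integral_finset_sum _ (fun i _ => integrable_finset_sum _ fun j _ => hIAA i j),
      integral_finset_sum _ (fun i _ => integrable_finset_sum _ fun j _ => hIAB i j),
      integral_finset_sum _ (fun i _ => integrable_finset_sum _ fun j _ => hIBB i j)]
    have p1 : ∀ i ∈ s, ∫ ω, ∑ j ∈ s, A i ω * A j ω ∂μ
        = ∑ j ∈ s, (if i = j then a2 else a * a) := by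
      intro i _
      rw [integral_finset_sum _ (fun j _ => hIAA i j)]
      refine Finset.sum_congr rfl fun j _ => ?_
      split_ifs with h
      · subst h; rw [← hEA2 i]; congr 1; funext ω; ring
      · exact hAA i j h
    have p2 : ∀ i ∈ s, ∫ ω, ∑ j ∈ sᶜ, A i ω * B j ω ∂μ
        = ((sᶜ).card : ℝ) * (a * b) := by
      intro i hi
      rw [integral_finset_sum _ (fun j _ => hIAB i j),
        Finset.sum_congr rfl (fun j hj => hAB i j
          (fun h => (Finset.mem_compl.mp hj) (h ▸ hi))),
        Finset.sum_const, nsmul_eq_mul]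
    have p3 : ∀ i ∈ sᶜ, ∫ ω, ∑ j ∈ sᶜ, B i ω * B j ω ∂μ
        = ∑ j ∈ sᶜ, (if i = j then b2 else b * b) := by
      intro i _
      rw [integral_finset_sum _ (fun j _ => hIBB i j)]
      refine Finset.sum_congr rfl fun j _ => ?_
      split_ifs with h
      · subst h; rw [← hEB2 i]; congr 1; funext ω; ring
      · exact hBB i j h
    rw [Finset.sum_congr rfl p1, Finset.sum_congr rfl p2, Finset.sum_congr rfl p3,
      sum_ite_diag s a2 (a * a), sum_ite_diag sᶜ b2 (b * b),
      Finset.sum_const, nsmul_eq_mul, hcard, hcardc]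
    ring
  -- assemble
  have hNR : ((n.choose n1 : ℕ) : ℝ) ≠ 0 :=
    Nat.cast_ne_zero.mpr (Nat.choose_pos hlt.le).ne'
  rw [Finset.sum_congr rfl hsecond, Finset.sum_congr rfl hfirst,
    Finset.sum_const, Finset.sum_const, Finset.card_powersetCard,
    Finset.card_univ, Fintype.card_fin, nsmul_eq_mul, nsmul_eq_mul,
    sample_var_expect μ n hn A hA2 a a2 hEA2 hAA,
    sample_var_expect μ n hn B hB2 b b2 hEB2 hBB]
  field_simp
  ring


/-- Under complete randomization (uniform over treatment assignments of size `n₁`)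
and i.i.d. sampling, the variance of the PAV estimator (over the joint randomness,
computed as `E[λ̂²] - (E[λ̂])²`) equals `E(S_{f1}²)/n₁ + E(S_{f0}²)/n₀`, where
`S_{ft}²` is the sample variance of `Y_{fi}(t) = 1{f(Xᵢ) = t} Yᵢ(t)` (so
`Y_{fi}(1) = f(Xᵢ) Yᵢ(1)` and `Y_{fi}(0) = (1 - f(Xᵢ)) Yᵢ(0)`). -/
theorem pav_estimator_variance {Ω α : Type*} [MeasurableSpace Ω] [MeasurableSpace α]
    (μ : Measure Ω) [IsProbabilityMeasure μ]
    (n n1 : ℕ) (hn1 : 1 ≤ n1) (hlt : n1 < n)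
    (Y1 Y0 : Fin n → Ω → ℝ) (X : Fin n → Ω → α) (f : α → ℝ)
    (hL2 : ∀ i, MemLp (Y1 i) 2 μ ∧ MemLp (Y0 i) 2 μ)
    (hmeas : ∀ i, Measurable (Y1 i) ∧ Measurable (Y0 i) ∧ Measurable (X i))
    (hf : Measurable f) (hbin : ∀ a, f a = 0 ∨ f a = 1)
    (hindep : iIndepFun
      (fun i ω => (Y1 i ω, Y0 i ω, X i ω)) μ)
    (hident : ∀ i : Fin n,
      Measure.map (fun ω => (Y1 i ω, Y0 i ω, X i ω)) μ
        = Measure.map (fun ω => (Y1 ⟨0, by omega⟩ ω, Y0 ⟨0, by omega⟩ ω,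
            X ⟨0, by omega⟩ ω)) μ) :
    (1 / (n.choose n1 : ℝ)) *
        (∑ s ∈ Finset.powersetCard n1 (Finset.univ : Finset (Fin n)),
          ∫ ω, ((1 / (n1 : ℝ)) * ∑ i ∈ s, f (X i ω) * Y1 i ω
            + (1 / ((n - n1 : ℕ) : ℝ)) * ∑ i ∈ sᶜ, (1 - f (X i ω)) * Y0 i ω) ^ 2 ∂μ)
      - ((1 / (n.choose n1 : ℝ)) *
          ∑ s ∈ Finset.powersetCard n1 (Finset.univ : Finset (Fin n)),
            ∫ ω, ((1 / (n1 : ℝ)) * ∑ i ∈ s, f (X i ω) * Y1 i ω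
              + (1 / ((n - n1 : ℕ) : ℝ)) * ∑ i ∈ sᶜ, (1 - f (X i ω)) * Y0 i ω) ∂μ) ^ 2
      = (∫ ω, (∑ i, (f (X i ω) * Y1 i ω
              - (1 / (n : ℝ)) * ∑ j, f (X j ω) * Y1 j ω) ^ 2) / ((n : ℝ) - 1) ∂μ)
            / (n1 : ℝ)
        + (∫ ω, (∑ i, ((1 - f (X i ω)) * Y0 i ω
              - (1 / (n : ℝ)) * ∑ j, (1 - f (X j ω)) * Y0 j ω) ^ 2) / ((n : ℝ) - 1) ∂μ)
            / ((n - n1 : ℕ) : ℝ) := by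
  have hn : 2 ≤ n := by omega
  set i0 : Fin n := ⟨0, by omega⟩ with hi0
  set Z : Fin n → Ω → ℝ × ℝ × α := fun i ω => (Y1 i ω, Y0 i ω, X i ω) with hZ
  have hZm : ∀ i, Measurable (Z i) := fun i =>
    (hmeas i).1.prodMk ((hmeas i).2.1.prodMk (hmeas i).2.2)
  -- the two coordinate functionals
  set gA : ℝ × ℝ × α → ℝ := fun p => f p.2.2 * p.1 with hgA
  set gB : ℝ × ℝ × α → ℝ := fun p => (1 - f p.2.2) * p.2.1 with hgB
  have hgAm : Measurable gA :=
    (hf.comp (measurable_snd.comp measurable_snd)).mul measurable_fst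
  have hgBm : Measurable gB :=
    (measurable_const.sub (hf.comp (measurable_snd.comp measurable_snd))).mul
      (measurable_fst.comp measurable_snd)
  -- identical distribution transfer
  have hmap : ∀ i, Measure.map (Z i) μ = Measure.map (Z i0) μ := fun i => hident i
  have hkey : ∀ (g : ℝ × ℝ × α → ℝ), Measurable g → ∀ i : Fin n,
      ∫ ω, g (Z i ω) ∂μ = ∫ ω, g (Z i0 ω) ∂μ := by
    intro g hg i
    rw [← integral_map (hZm i).aemeasurable hg.aestronglyMeasurable, hmap i,
      integral_map (hZm i0).aemeasurable hg.aestronglyMeasurable]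
  -- MemLp of the transformed outcomes
  have hA2 : ∀ i, MemLp (fun ω => f (X i ω) * Y1 i ω) 2 μ := by
    intro i
    refine MemLp.of_le (hL2 i).1
      (((hf.comp (hmeas i).2.2).mul (hmeas i).1).aestronglyMeasurable)
      (Filter.Eventually.of_forall fun ω => ?_)
    rcases hbin (X i ω) with h | h <;>
      simp [h, Real.norm_eq_abs, abs_nonneg]
  have hB2 : ∀ i, MemLp (fun ω => (1 - f (X i ω)) * Y0 i ω) 2 μ := by
    intro i
    refine MemLp.of_le (hL2 i).2
      (((measurable_const.sub (hf.comp (hmeas i).2.2)).mul (hmeas i).2.1).aestronglyMeasurable)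
      (Filter.Eventually.of_forall fun ω => ?_)
    rcases hbin (X i ω) with h | h <;>
      simp [h, Real.norm_eq_abs, abs_nonneg]
  -- A i * B i = 0
  have hzero : ∀ (i : Fin n) (ω : Ω),
      (f (X i ω) * Y1 i ω) * ((1 - f (X i ω)) * Y0 i ω) = 0 := by
    intro i ω
    rcases hbin (X i ω) with h | h <;> simp [h]
  -- pairwise independence of the transformed pairs
  have hpair : ∀ i j : Fin n, i ≠ j →
      IndepFun (fun ω => (f (X i ω) * Y1 i ω, (1 - f (X i ω)) * Y0 i ω))
        (fun ω => (f (X j ω) * Y1 j ω, (1 - f (X j ω)) * Y0 j ω)) μ := by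
    intro i j hij
    exact (hindep.indepFun hij).comp (hgAm.prodMk hgBm) (hgAm.prodMk hgBm)
  -- moments
  have hEA : ∀ i, ∫ ω, f (X i ω) * Y1 i ω ∂μ = ∫ ω, f (X i0 ω) * Y1 i0 ω ∂μ :=
    fun i => hkey gA hgAm i
  have hEB : ∀ i, ∫ ω, (1 - f (X i ω)) * Y0 i ω ∂μ
      = ∫ ω, (1 - f (X i0 ω)) * Y0 i0 ω ∂μ := fun i => hkey gB hgBm i
  have hEA2 : ∀ i, ∫ ω, (f (X i ω) * Y1 i ω) ^ 2 ∂μ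
      = ∫ ω, (f (X i0 ω) * Y1 i0 ω) ^ 2 ∂μ :=
    fun i => hkey (fun p => gA p ^ 2) (hgAm.pow_const 2) i
  have hEB2 : ∀ i, ∫ ω, ((1 - f (X i ω)) * Y0 i ω) ^ 2 ∂μ
      = ∫ ω, ((1 - f (X i0 ω)) * Y0 i0 ω) ^ 2 ∂μ :=
    fun i => hkey (fun p => gB p ^ 2) (hgBm.pow_const 2) i
  exact pav_key μ n n1 hn1 hlt
    (fun i ω => f (X i ω) * Y1 i ω) (fun i ω => (1 - f (X i ω)) * Y0 i ω)
    hA2 hB2 hzero hpair _ _ _ _ hEA hEB hEA2 hEB2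
end

section
/- Under the equal-allocation setting, the variance of the ex-ante PAPE estimator minus the variance of the ex-post PAPE estimator equals (2n/(n-1)²)[p_f² V(Y(1)) + (1-p_f)² V(Y(0)) + 2p_f² V(Y(1)|f(X)=1) + 2(1-p_f)² V(Y(0)|f(X)=0) + 2p_f(1-p_f){(1-p_f) M_{00}² + p_f M_{11}²}], which is nonnegative, given the centering condition E(Y(1)+Y(0)|f(X)=1) = E(Y(1)+Y(0)|f(X)=0) = 0, where M_{st} = E(Y(s)|f(X)=t). -/
open MeasureTheory

/-- Variance of a real-valued random variable. -/
noncomputable def Var {Ω : Type*} [MeasurableSpace Ω] (μ : Measure Ω) (X : Ω → ℝ) : ℝ :=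
  ∫ ω, (X ω - ∫ x, X x ∂μ) ^ 2 ∂μ

/-- Conditional expectation of `Y` given the event `A`. -/
noncomputable def cexp {Ω : Type*} [MeasurableSpace Ω] (μ : Measure Ω) (A : Set Ω)
    (Y : Ω → ℝ) : ℝ :=
  (∫ ω in A, Y ω ∂μ) / (μ A).toReal

lemma cexp_sq_le {Ω : Type*} [MeasurableSpace Ω] (μ : Measure Ω) [IsFiniteMeasure μ]
    (A : Set Ω) (Y : Ω → ℝ) (hY : MemLp Y 2 μ)
    (hq : 0 < (μ A).toReal) :
    (cexp μ A Y) ^ 2 ≤ cexp μ A (fun ω => Y ω ^ 2) := by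
  set q : ℝ := (μ A).toReal with hqdef
  set m : ℝ := cexp μ A Y with hm
  have hYint : Integrable Y μ := hY.integrable one_le_two
  have hYsq : Integrable (fun ω => Y ω ^ 2) μ := hY.integrable_sq
  have hIA : (∫ ω in A, Y ω ∂μ) = q * m := by
    rw [hm, cexp, ← hqdef]; field_simp [hq.ne']
  have hexp : ∫ ω in A, (Y ω - m) ^ 2 ∂μ
      = (∫ ω in A, Y ω ^ 2 ∂μ) - 2 * m * (∫ ω in A, Y ω ∂μ) + m ^ 2 * q := by
    have h1 : Integrable (fun ω => Y ω ^ 2) (μ.restrict A) := hYsq.restrict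
    have h2 : Integrable (fun ω => 2 * m * Y ω) (μ.restrict A) :=
      (hYint.restrict).const_mul _
    calc ∫ ω in A, (Y ω - m) ^ 2 ∂μ
        = ∫ ω in A, (Y ω ^ 2 - 2 * m * Y ω + m ^ 2) ∂μ := by
          congr 1; ext ω; ring
      _ = (∫ ω in A, (Y ω ^ 2 - 2 * m * Y ω) ∂μ) + ∫ ω in A, (m ^ 2 : ℝ) ∂μ := by
          have h3 : Integrable (fun ω => Y ω ^ 2 - 2 * m * Y ω) (μ.restrict A) := h1.sub h2
          rw [integral_add h3 (integrable_const _)]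
      _ = (∫ ω in A, Y ω ^ 2 ∂μ) - 2 * m * (∫ ω in A, Y ω ∂μ) + m ^ 2 * q := by
          rw [integral_sub h1 h2, integral_const_mul, setIntegral_const, smul_eq_mul, measureReal_def, ← hqdef]
          ring
  have hnn : 0 ≤ ∫ ω in A, (Y ω - m) ^ 2 ∂μ :=
    integral_nonneg fun ω => sq_nonneg _
  have key : 0 ≤ (∫ ω in A, Y ω ^ 2 ∂μ) - q * m ^ 2 := by
    rw [hexp, hIA] at hnn; nlinarith
  rw [cexp, show (fun ω => Y ω ^ 2) = fun ω => Y ω ^ 2 from rfl, le_div_iff₀ hq]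
  nlinarith

/-- Under the equal-allocation setting and the centering conditions
`M_{11} + M_{01} = 0` and `M_{00} + M_{10} = 0`, the ex-ante minus ex-post variance
difference (Equation (11) of the paper) equals
`(2n/(n-1)²)[p² V(Y(1)) + (1-p)² V(Y(0)) + 2p² V(Y(1)|f=1) + 2(1-p)² V(Y(0)|f=0)
  + 2p(1-p){(1-p) M_{00}² + p M_{11}²}]`, which is nonnegative. -/
theorem exante_expost_var_diff {Ω α : Type*} [MeasurableSpace Ω] [MeasurableSpace α]
    (μ : Measure Ω) [IsProbabilityMeasure μ]
    (Y1 Y0 : Ω → ℝ) (X : Ω → α) (f : α → ℝ)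
    (hY1 : MemLp Y1 2 μ) (hY0 : MemLp Y0 2 μ)
    (hX : Measurable X) (hf : Measurable f)
    (hbin : ∀ a, f a = 0 ∨ f a = 1)
    (n : ℕ) (hn : 2 ≤ n)
    (p M11 M00 M01 M10 EY1sq EY0sq D : ℝ)
    (hp : p = (μ {ω | f (X ω) = 1}).toReal)
    (hppos : 0 < p) (hplt : p < 1)
    (hM11 : M11 = cexp μ {ω | f (X ω) = 1} Y1)
    (hM00 : M00 = cexp μ {ω | f (X ω) = 0} Y0)
    (hM01 : M01 = cexp μ {ω | f (X ω) = 1} Y0)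
    (hM10 : M10 = cexp μ {ω | f (X ω) = 0} Y1)
    (hE1 : EY1sq = cexp μ {ω | f (X ω) = 1} (fun ω => Y1 ω ^ 2))
    (hE0 : EY0sq = cexp μ {ω | f (X ω) = 0} (fun ω => Y0 ω ^ 2))
    (hcent1 : M11 + M01 = 0) (hcent0 : M00 + M10 = 0)
    (hD : D = (2 * (n : ℝ) / ((n : ℝ) - 1) ^ 2)
        * (p ^ 2 * Var μ Y1 + (1 - p) ^ 2 * Var μ Y0
          - 2 * p * (1 - p) * M00 * M11
          + 2 * p ^ 2 * (EY1sq - (∫ ω, Y1 ω ∂μ) * M11)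
          + 2 * (1 - p) ^ 2 * (EY0sq - (∫ ω, Y0 ω ∂μ) * M00))) :
    D = (2 * (n : ℝ) / ((n : ℝ) - 1) ^ 2)
        * (p ^ 2 * Var μ Y1 + (1 - p) ^ 2 * Var μ Y0
          + 2 * p ^ 2 * (EY1sq - M11 ^ 2)
          + 2 * (1 - p) ^ 2 * (EY0sq - M00 ^ 2)
          + 2 * p * (1 - p) * ((1 - p) * M00 ^ 2 + p * M11 ^ 2))
      ∧ 0 ≤ D := by
  set A : Set Ω := {ω | f (X ω) = 1} with hAdef
  set B : Set Ω := {ω | f (X ω) = 0} with hBdef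
  have hA : MeasurableSet A := (hf.comp hX) (measurableSet_singleton 1)
  have hBc : B = Aᶜ := by
    ext ω
    simp only [hAdef, hBdef, Set.mem_setOf_eq, Set.mem_compl_iff]
    rcases hbin (X ω) with h | h <;> simp [h]
  have hμA : (μ A).toReal = p := hp.symm
  have hμB : (μ B).toReal = 1 - p := by
    rw [hBc, measure_compl hA (measure_ne_top μ A), measure_univ,
      ENNReal.toReal_sub_of_le prob_le_one ENNReal.one_ne_top, ENNReal.toReal_one, hμA]
  have hq : (0:ℝ) < 1 - p := by linarith
  have hY1int : Integrable Y1 μ := hY1.integrable one_le_two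
  have hY0int : Integrable Y0 μ := hY0.integrable one_le_two
  -- set integrals
  have hIA1 : (∫ ω in A, Y1 ω ∂μ) = p * M11 := by
    rw [hM11, cexp, hμA]; field_simp
  have hIB1 : (∫ ω in B, Y1 ω ∂μ) = (1 - p) * M10 := by
    rw [hM10, cexp, hμB]; field_simp
  have hIA0 : (∫ ω in A, Y0 ω ∂μ) = p * M01 := by
    rw [hM01, cexp, hμA]; field_simp
  have hIB0 : (∫ ω in B, Y0 ω ∂μ) = (1 - p) * M00 := by
    rw [hM00, cexp, hμB]; field_simp
  -- total expectations
  have hEY1 : (∫ ω, Y1 ω ∂μ) = p * M11 - (1 - p) * M00 := by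
    have := integral_add_compl hA hY1int
    rw [← hBc] at this
    have h10 : M10 = -M00 := by linarith
    rw [← this, hIA1, hIB1, h10]; ring
  have hEY0 : (∫ ω, Y0 ω ∂μ) = (1 - p) * M00 - p * M11 := by
    have := integral_add_compl hA hY0int
    rw [← hBc] at this
    have h01 : M01 = -M11 := by linarith
    rw [← this, hIA0, hIB0, h01]; ring
  -- conditional second moments dominate squared conditional means
  have hc1 : M11 ^ 2 ≤ EY1sq := by
    rw [hM11, hE1]
    exact cexp_sq_le μ A Y1 hY1 (hμA ▸ hppos)
  have hc0 : M00 ^ 2 ≤ EY0sq := by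
    rw [hM00, hE0]
    exact cexp_sq_le μ B Y0 hY0 (hμB ▸ hq)
  have hV1 : 0 ≤ Var μ Y1 := integral_nonneg fun ω => sq_nonneg _
  have hV0 : 0 ≤ Var μ Y0 := integral_nonneg fun ω => sq_nonneg _
  have hDeq : D = (2 * (n : ℝ) / ((n : ℝ) - 1) ^ 2)
        * (p ^ 2 * Var μ Y1 + (1 - p) ^ 2 * Var μ Y0
          + 2 * p ^ 2 * (EY1sq - M11 ^ 2)
          + 2 * (1 - p) ^ 2 * (EY0sq - M00 ^ 2)
          + 2 * p * (1 - p) * ((1 - p) * M00 ^ 2 + p * M11 ^ 2)) := by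
    rw [hD, hEY1, hEY0]; ring
  refine ⟨hDeq, ?_⟩
  rw [hDeq]
  have hfac : 0 ≤ 2 * (n : ℝ) / ((n : ℝ) - 1) ^ 2 := by positivity
  have hinner : 0 ≤ p ^ 2 * Var μ Y1 + (1 - p) ^ 2 * Var μ Y0
          + 2 * p ^ 2 * (EY1sq - M11 ^ 2)
          + 2 * (1 - p) ^ 2 * (EY0sq - M00 ^ 2)
          + 2 * p * (1 - p) * ((1 - p) * M00 ^ 2 + p * M11 ^ 2) := by
    have t1 : 0 ≤ 2 * p ^ 2 * (EY1sq - M11 ^ 2) :=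
      mul_nonneg (by positivity) (by linarith)
    have t0 : 0 ≤ 2 * (1 - p) ^ 2 * (EY0sq - M00 ^ 2) :=
      mul_nonneg (by positivity) (by linarith)
    have t2 : 0 ≤ 2 * p * (1 - p) * ((1 - p) * M00 ^ 2 + p * M11 ^ 2) := by positivity
    have t3 : 0 ≤ p ^ 2 * Var μ Y1 := mul_nonneg (by positivity) hV1
    have t4 : 0 ≤ (1 - p) ^ 2 * Var μ Y0 := mul_nonneg (by positivity) hV0
    linarith
  exact mul_nonneg hfac hinner
end
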